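/- arXiv:2004.11145 — 3 statements merged into one kernel-verified Lean document; each statement's English description precedes it below -/
import Mathlib

section
/- In the multi-agent setup, fix an agent i, a point ψ₀ⁱ ∈ Ψⁱ, and a counterfactual baseline B that assigns a real number B(o, a^{∖i}) to each joint observation o and each tuple a^{∖i} of actions of the agents other than i (so B does not depend on agent i's action). Then the Fréchet derivative at ψ₀ⁱ of ψⁱ ↦ ∑_s ∑_o ∑_a d(s)·E(o|s)·(∏_j πʲ(aʲ|oʲ))·B(o, a^{∖i}) is the zero map; equivalently, ∑_{s,o,a} d(s)E(o|s)(∏_j πʲ(aʲ|oʲ))·D_{ψⁱ}(log πⁱ_{ψⁱ}(aⁱ|oⁱ))|_{ψ₀ⁱ}·B(o, a^{∖i}) = 0, i.e., subtracting a baseline independent of aⁱ does not change the expected policy gradient of agent i. -/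
/-- Subtracting a counterfactual baseline `B(o, a^{∖i})` (independent of agent `i`'s
action) does not change the expected policy gradient of agent `i`: the Fréchet
derivative at `ψ i` of `ψⁱ ↦ ∑_{s,o,a} d(s)·E(o|s)·(∏ j, πʲ(aʲ|oʲ))·B(o,a^{∖i})` is
the zero map, and equivalently the corresponding score-weighted sum vanishes. -/
theorem baseline_gradient_vanishes
    {ι : Type*} [Fintype ι] [DecidableEq ι]
    {S : Type*} [Fintype S]
    {O : ι → Type*} [∀ j, Fintype (O j)]
    {A : ι → Type*} [∀ j, Fintype (A j)]
    {Ψ : ι → Type*} [∀ j, NormedAddCommGroup (Ψ j)] [∀ j, NormedSpace ℝ (Ψ j)]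
    (π : ∀ j, Ψ j → O j → A j → ℝ)
    (hpos : ∀ (j : ι) (ψj : Ψ j) (oj : O j) (aj : A j), 0 < π j ψj oj aj)
    (hdiff : ∀ (j : ι) (ψj : Ψ j) (oj : O j) (aj : A j),
      DifferentiableAt ℝ (fun p => π j p oj aj) ψj)
    (hnorm : ∀ (j : ι) (ψj : Ψ j) (oj : O j), ∑ aj : A j, π j ψj oj aj = 1)
    (d : S → ℝ) (hd : ∀ s, 0 ≤ d s)
    (E : S → (∀ j, O j) → ℝ) (hE : ∀ s o, 0 ≤ E s o)
    (i : ι) (ψ : ∀ j, Ψ j)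
    (B : (∀ j, O j) → (∀ j, A j) → ℝ)
    (hB : ∀ (o : ∀ j, O j) (a a' : ∀ j, A j),
      (∀ j, j ≠ i → a j = a' j) → B o a = B o a') :
    fderiv ℝ (fun ψi : Ψ i => ∑ s : S, ∑ o : (∀ j, O j), ∑ a : (∀ j, A j),
        d s * E s o * (∏ j, π j (Function.update ψ i ψi j) (o j) (a j)) * B o a)
        (ψ i) = 0
    ∧ ∑ s : S, ∑ o : (∀ j, O j), ∑ a : (∀ j, A j),
        (d s * E s o * (∏ j, π j (ψ j) (o j) (a j)) * B o a) •
          fderiv ℝ (fun ψi : Ψ i => Real.log (π i ψi (o i) (a i))) (ψ i) = 0 := by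
  classical
  obtain hAe | hA := isEmpty_or_nonempty (A i)
  · haveI : IsEmpty (∀ j, A j) := ⟨fun a => hAe.elim (a i)⟩
    constructor
    · have h : (fun ψi : Ψ i => ∑ s : S, ∑ o : (∀ j, O j), ∑ a : (∀ j, A j),
          d s * E s o * (∏ j, π j (Function.update ψ i ψi j) (o j) (a j)) * B o a)
          = fun _ => (0 : ℝ) := by
        funext ψi; simp
      rw [h]; exact fderiv_const_apply 0
    · simp
  · obtain ⟨a₀⟩ := hA
    set e := Equiv.piSplitAt i A with he
    have hei : ∀ (x : A i) (r : ∀ j : {j // j ≠ i}, A j), e.symm (x, r) i = x := by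
      intro x r; simp [he]
    have hej : ∀ (x : A i) (r : ∀ j : {j // j ≠ i}, A j) (j : ι) (h : j ≠ i),
        e.symm (x, r) j = r ⟨j, h⟩ := by
      intro x r j h; simp [he, h]
    have hsum0 : ∀ oi : O i, ∑ ai : A i, fderiv ℝ (fun p => π i p oi ai) (ψ i) = 0 := by
      intro oi
      have h1 : fderiv ℝ (fun p => ∑ ai : A i, π i p oi ai) (ψ i)
          = ∑ ai : A i, fderiv ℝ (fun p => π i p oi ai) (ψ i) :=
        fderiv_fun_sum (fun ai _ => hdiff i (ψ i) oi ai)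
      rw [← h1]
      have h2 : (fun p => ∑ ai : A i, π i p oi ai) = fun _ => (1 : ℝ) :=
        funext fun p => hnorm i p oi
      rw [h2, fderiv_fun_const]
      rfl
    have hclaim : ∀ (oi : O i) (c : (∀ j, A j) → ℝ),
        (∀ a a' : ∀ j, A j, (∀ j, j ≠ i → a j = a' j) → c a = c a') →
        ∑ a : (∀ j, A j), c a • fderiv ℝ (fun p => π i p oi (a i)) (ψ i) = 0 := by
      intro oi c hc
      rw [← Equiv.sum_comp e.symm
        (fun a : (∀ j, A j) => c a • fderiv ℝ (fun p => π i p oi (a i)) (ψ i)),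
        Fintype.sum_prod_type_right]
      refine Finset.sum_eq_zero fun r _ => ?_
      have hterm : ∀ x : A i,
          c (e.symm (x, r)) • fderiv ℝ (fun p => π i p oi (e.symm (x, r) i)) (ψ i)
          = c (e.symm (a₀, r)) • fderiv ℝ (fun p => π i p oi x) (ψ i) := by
        intro x
        rw [hei, hc (e.symm (x, r)) (e.symm (a₀, r))
          (fun j h => (hej x r j h).trans (hej a₀ r j h).symm)]
      rw [Finset.sum_congr rfl (fun x _ => hterm x), ← Finset.smul_sum, hsum0, smul_zero]
    have key1 : ∀ (ψi : Ψ i) (o : ∀ j, O j),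
        ∑ a : (∀ j, A j), (∏ j, π j (Function.update ψ i ψi j) (o j) (a j)) * B o a
        = ∑ r : (∀ j : {j // j ≠ i}, A j),
            (∏ j ∈ Finset.univ.erase i, π j (ψ j) (o j) (e.symm (a₀, r) j))
              * B o (e.symm (a₀, r)) := by
      intro ψi o
      rw [← Equiv.sum_comp e.symm
        (fun a : (∀ j, A j) => (∏ j, π j (Function.update ψ i ψi j) (o j) (a j)) * B o a),
        Fintype.sum_prod_type_right]
      refine Finset.sum_congr rfl fun r _ => ?_
      have hprod : ∀ x : A i,
          (∏ j, π j (Function.update ψ i ψi j) (o j) (e.symm (x, r) j))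
          = π i ψi (o i) x * ∏ j ∈ Finset.univ.erase i, π j (ψ j) (o j) (e.symm (a₀, r) j) := by
        intro x
        rw [← Finset.mul_prod_erase Finset.univ
          (fun j => π j (Function.update ψ i ψi j) (o j) (e.symm (x, r) j)) (Finset.mem_univ i)]
        congr 1
        · rw [Function.update_self, hei]
        · refine Finset.prod_congr rfl fun j hj => ?_
          have hji : j ≠ i := Finset.ne_of_mem_erase hj
          rw [Function.update_of_ne hji, hej x r j hji, hej a₀ r j hji]
      calc ∑ x : A i, (∏ j, π j (Function.update ψ i ψi j) (o j) (e.symm (x, r) j))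
              * B o (e.symm (x, r))
          = ∑ x : A i, π i ψi (o i) x *
              ((∏ j ∈ Finset.univ.erase i, π j (ψ j) (o j) (e.symm (a₀, r) j))
                * B o (e.symm (a₀, r))) := by
            refine Finset.sum_congr rfl fun x _ => ?_
            rw [hprod x, hB o (e.symm (x, r)) (e.symm (a₀, r))
              (fun j h => (hej x r j h).trans (hej a₀ r j h).symm), mul_assoc]
        _ = _ := by rw [← Finset.sum_mul, hnorm, one_mul]
    constructor
    · have hconst : (fun ψi : Ψ i => ∑ s : S, ∑ o : (∀ j, O j), ∑ a : (∀ j, A j),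
          d s * E s o * (∏ j, π j (Function.update ψ i ψi j) (o j) (a j)) * B o a)
          = fun _ => ∑ s : S, ∑ o : (∀ j, O j), (d s * E s o) *
              ∑ r : (∀ j : {j // j ≠ i}, A j),
                (∏ j ∈ Finset.univ.erase i, π j (ψ j) (o j) (e.symm (a₀, r) j))
                  * B o (e.symm (a₀, r)) := by
        funext ψi
        refine Finset.sum_congr rfl fun s _ => Finset.sum_congr rfl fun o _ => ?_
        rw [← key1 ψi o, Finset.mul_sum]
        exact Finset.sum_congr rfl fun a _ => by ring
      rw [hconst]
      exact fderiv_const_apply _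
    · have hlog : ∀ (o : ∀ j, O j) (a : ∀ j, A j),
          fderiv ℝ (fun ψi => Real.log (π i ψi (o i) (a i))) (ψ i)
          = (π i (ψ i) (o i) (a i))⁻¹ • fderiv ℝ (fun p => π i p (o i) (a i)) (ψ i) := by
        intro o a
        exact (((hdiff i (ψ i) (o i) (a i)).hasFDerivAt).log
          (ne_of_gt (hpos _ _ _ _))).fderiv
      refine Finset.sum_eq_zero fun s _ => Finset.sum_eq_zero fun o _ => ?_
      calc ∑ a : (∀ j, A j), (d s * E s o * (∏ j, π j (ψ j) (o j) (a j)) * B o a) •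
              fderiv ℝ (fun ψi : Ψ i => Real.log (π i ψi (o i) (a i))) (ψ i)
          = ∑ a : (∀ j, A j),
              (d s * E s o * B o a * ∏ j ∈ Finset.univ.erase i, π j (ψ j) (o j) (a j)) •
                fderiv ℝ (fun p => π i p (o i) (a i)) (ψ i) := by
            refine Finset.sum_congr rfl fun a _ => ?_
            rw [hlog o a, smul_smul]
            congr 1
            have hne : π i (ψ i) (o i) (a i) ≠ 0 := ne_of_gt (hpos _ _ _ _)
            rw [← Finset.mul_prod_erase Finset.univ
              (fun j => π j (ψ j) (o j) (a j)) (Finset.mem_univ i)]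
            field_simp
        _ = 0 := hclaim (o i) _ (fun a a' hja => by
            rw [hB o a a' hja]
            congr 1
            exact Finset.prod_congr rfl fun j hj => by
              rw [hja j (Finset.ne_of_mem_erase hj)])
end

section
/- (Entropy-regularized multi-agent actor gradient; the exact on-policy part of the SAC-based joint gradient, Proposition 3.) In the multi-agent setup, fix agent i, ψ₀ⁱ ∈ Ψⁱ, a real constant α, and fixed real-valued functions Q(o,a) and B(o, a^{∖i}) independent of ψⁱ (with B independent of agent i's action). Define J(ψⁱ) = ∑_{s,o,a} d(s)E(o|s)(∏_j πʲ(aʲ|oʲ))·[Q(o,a) − α·log πⁱ_{ψⁱ}(aⁱ|oⁱ) − B(o,a^{∖i})]. Then the Fréchet derivative of J at ψ₀ⁱ equals ∑_{s,o,a} d(s)E(o|s)(∏_j πʲ(aʲ|oʲ))·D_{ψⁱ}(log πⁱ_{ψⁱ}(aⁱ|oⁱ))|_{ψ₀ⁱ}·[Q(o,a) − α·log πⁱ_{ψ₀ⁱ}(aⁱ|oⁱ) − B(o,a^{∖i})]; in particular the extra term −α·∑_{aⁱ} D_{ψⁱ}πⁱ(aⁱ|oⁱ) vanishes because ∑_{aⁱ}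 πⁱ_{ψⁱ}(aⁱ|oⁱ) = 1 for all ψⁱ. -/
open Finset

private lemma aux_term {X : Type*} [NormedAddCommGroup X] [NormedSpace ℝ X]
    {p : X → ℝ} {u : X →L[ℝ] ℝ} {x₀ : X} (hp : HasFDerivAt p u x₀)
    (hpos : 0 < p x₀) (c q α : ℝ) :
    HasFDerivAt (fun x => c * p x * (q - α * Real.log (p x)))
      ((c * (q - α * Real.log (p x₀)) - α * c) • u) x₀ := by
  have hlog : HasFDerivAt (fun x => Real.log (p x)) ((p x₀)⁻¹ • u) x₀ :=
    hp.log hpos.ne'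
  have h := (hp.const_mul c).fun_mul ((hasFDerivAt_const q x₀).fun_sub (hlog.const_mul α))
  refine h.congr_fderiv ?_
  ext v
  have hP : p x₀ ≠ 0 := hpos.ne'
  simp only [ContinuousLinearMap.smul_apply, ContinuousLinearMap.add_apply,
    ContinuousLinearMap.sub_apply, ContinuousLinearMap.zero_apply, smul_eq_mul]
  field_simp
  ring

private lemma aux_zero {ι : Type*} [Fintype ι] [DecidableEq ι] {A : ι → Type*}
    [∀ j, Fintype (A j)] (i : ι) {M : Type*} [AddCommGroup M] [Module ℝ M]
    (w : (∀ j, A j) → ℝ) (hw : ∀ a a' : ∀ j, A j, (∀ j, j ≠ i → a j = a' j) → w a = w a')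
    (u : A i → M) (hu : ∑ b, u b = 0) :
    ∑ a : (∀ j, A j), w a • u (a i) = 0 := by
  classical
  rcases isEmpty_or_nonempty (A i) with hAi | hAi
  · have : IsEmpty (∀ j, A j) := ⟨fun a => hAi.false (a i)⟩
    simp
  obtain ⟨b₀⟩ := hAi
  set e := Equiv.piSplitAt i A with he
  rw [← e.symm.sum_comp (fun a => w a • u (a i))]
  rw [Fintype.sum_prod_type]
  have h1 : ∀ (b : A i) (g : ∀ j : {j // j ≠ i}, A j), (e.symm (b, g)) i = b := by
    intro b g; simp [he, Equiv.piSplitAt]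
  have h2 : ∀ (b : A i) (g : ∀ j : {j // j ≠ i}, A j), w (e.symm (b, g)) = w (e.symm (b₀, g)) := by
    intro b g
    refine hw _ _ fun j hj => ?_
    simp [he, Equiv.piSplitAt, hj]
  calc ∑ b, ∑ g, w (e.symm (b, g)) • u ((e.symm (b, g)) i)
      = ∑ g, ∑ b, w (e.symm (b₀, g)) • u b := by
        rw [Finset.sum_comm]
        exact Finset.sum_congr rfl fun g _ => Finset.sum_congr rfl fun b _ => by
          rw [h1, h2]
    _ = ∑ g : ∀ j : {j // j ≠ i}, A j, w (e.symm (b₀, g)) • (0 : M) := by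
        refine Finset.sum_congr rfl fun g _ => ?_
        rw [← Finset.smul_sum, hu]
    _ = 0 := by simp


/-- Entropy-regularized multi-agent actor gradient (exact on-policy part of the
SAC-based joint gradient, Proposition 3): with `Q` and `B` fixed (`B` independent of
agent `i`'s action), the Fréchet derivative at `ψ i` of
`J(ψⁱ) = ∑_{s,o,a} d(s)E(o|s)(∏ j πʲ(aʲ|oʲ))·[Q − α·log πⁱ_{ψⁱ}(aⁱ|oⁱ) − B]` equals
`∑_{s,o,a} d(s)E(o|s)(∏ j πʲ(aʲ|oʲ))·[Q − α·log πⁱ_{ψ i}(aⁱ|oⁱ) − B] • D(log πⁱ)|_{ψ i}`. -/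
theorem sac_entropy_regularized_actor_gradient
    {ι : Type*} [Fintype ι] [DecidableEq ι]
    {S : Type*} [Fintype S]
    {O : ι → Type*} [∀ j, Fintype (O j)]
    {A : ι → Type*} [∀ j, Fintype (A j)]
    {Ψ : ι → Type*} [∀ j, NormedAddCommGroup (Ψ j)] [∀ j, NormedSpace ℝ (Ψ j)]
    (π : ∀ j, Ψ j → O j → A j → ℝ)
    (hpos : ∀ (j : ι) (ψj : Ψ j) (oj : O j) (aj : A j), 0 < π j ψj oj aj)
    (hdiff : ∀ (j : ι) (ψj : Ψ j) (oj : O j) (aj : A j),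
      DifferentiableAt ℝ (fun p => π j p oj aj) ψj)
    (hnorm : ∀ (j : ι) (ψj : Ψ j) (oj : O j), ∑ aj : A j, π j ψj oj aj = 1)
    (d : S → ℝ) (hd : ∀ s, 0 ≤ d s)
    (E : S → (∀ j, O j) → ℝ) (hE : ∀ s o, 0 ≤ E s o)
    (i : ι) (ψ : ∀ j, Ψ j)
    (α : ℝ)
    (Q : (∀ j, O j) → (∀ j, A j) → ℝ)
    (B : (∀ j, O j) → (∀ j, A j) → ℝ)
    (hB : ∀ (o : ∀ j, O j) (a a' : ∀ j, A j),
      (∀ j, j ≠ i → a j = a' j) → B o a = B o a') :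
    fderiv ℝ (fun ψi : Ψ i => ∑ s : S, ∑ o : (∀ j, O j), ∑ a : (∀ j, A j),
        d s * E s o * (∏ j, π j (Function.update ψ i ψi j) (o j) (a j)) *
          (Q o a - α * Real.log (π i ψi (o i) (a i)) - B o a)) (ψ i)
      = ∑ s : S, ∑ o : (∀ j, O j), ∑ a : (∀ j, A j),
          (d s * E s o * (∏ j, π j (ψ j) (o j) (a j)) *
            (Q o a - α * Real.log (π i (ψ i) (o i) (a i)) - B o a)) •
            fderiv ℝ (fun ψi : Ψ i => Real.log (π i ψi (o i) (a i))) (ψ i) := by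
  classical
  have hu : ∀ (oi : O i) (b : A i),
      HasFDerivAt (fun x => π i x oi b) (fderiv ℝ (fun x => π i x oi b) (ψ i)) (ψ i) :=
    fun oi b => (hdiff i (ψ i) oi b).hasFDerivAt
  have hu0 : ∀ oi : O i, ∑ b : A i, fderiv ℝ (fun x => π i x oi b) (ψ i) = 0 := by
    intro oi
    have h1 : HasFDerivAt (fun x => ∑ b : A i, π i x oi b)
        (∑ b : A i, fderiv ℝ (fun x => π i x oi b) (ψ i)) (ψ i) :=
      HasFDerivAt.fun_sum fun b _ => hu oi b
    have h2 : (fun x : Ψ i => ∑ b : A i, π i x oi b) = fun _ => 1 :=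
      funext fun x => hnorm i x oi
    rw [h2] at h1
    exact h1.unique (hasFDerivAt_const 1 _)
  set C : S → (∀ j, O j) → (∀ j, A j) → ℝ :=
    fun s o a => d s * E s o * ∏ j ∈ Finset.univ.erase i, π j (ψ j) (o j) (a j) with hC
  have hfun : (fun ψi : Ψ i => ∑ s : S, ∑ o : (∀ j, O j), ∑ a : (∀ j, A j),
      d s * E s o * (∏ j, π j (Function.update ψ i ψi j) (o j) (a j)) *
        (Q o a - α * Real.log (π i ψi (o i) (a i)) - B o a))
      = fun ψi : Ψ i => ∑ s : S, ∑ o : (∀ j, O j), ∑ a : (∀ j, A j),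
        C s o a * π i ψi (o i) (a i) *
          ((Q o a - B o a) - α * Real.log (π i ψi (o i) (a i))) := by
    funext x
    refine Finset.sum_congr rfl fun s _ => Finset.sum_congr rfl fun o _ =>
      Finset.sum_congr rfl fun a _ => ?_
    have hprod : ∏ j, π j (Function.update ψ i x j) (o j) (a j)
        = π i x (o i) (a i) * ∏ j ∈ Finset.univ.erase i, π j (ψ j) (o j) (a j) := by
      rw [← Finset.mul_prod_erase Finset.univ _ (Finset.mem_univ i)]
      rw [Function.update_self]
      congr 1
      exact Finset.prod_congr rfl fun j hj => by
        rw [Function.update_of_ne (Finset.mem_erase.1 hj).1]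
    rw [hprod, hC]
    ring
  rw [hfun]
  have hderiv : HasFDerivAt (fun ψi : Ψ i => ∑ s : S, ∑ o : (∀ j, O j), ∑ a : (∀ j, A j),
      C s o a * π i ψi (o i) (a i) * ((Q o a - B o a) - α * Real.log (π i ψi (o i) (a i))))
    (∑ s : S, ∑ o : (∀ j, O j), ∑ a : (∀ j, A j),
      ((C s o a * ((Q o a - B o a) - α * Real.log (π i (ψ i) (o i) (a i))) - α * C s o a)
        • fderiv ℝ (fun x => π i x (o i) (a i)) (ψ i))) (ψ i) := by
    refine HasFDerivAt.fun_sum fun s _ => HasFDerivAt.fun_sum fun o _ => HasFDerivAt.fun_sum fun a _ => ?_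
    exact aux_term (hu (o i) (a i)) (hpos i (ψ i) (o i) (a i)) _ _ _
  rw [hderiv.fderiv]
  have hzero : ∀ (s : S) (o : ∀ j, O j),
      ∑ a : (∀ j, A j), (α * C s o a) • fderiv ℝ (fun x => π i x (o i) (a i)) (ψ i) = 0 := by
    intro s o
    refine aux_zero i (fun a => α * C s o a) ?_
      (fun b => fderiv ℝ (fun x => π i x (o i) b) (ψ i)) (hu0 (o i))
    intro a a' h
    simp only [hC]
    congr 2
    exact Finset.prod_congr rfl fun j hj => by rw [h j (Finset.mem_erase.1 hj).1]
  have hterm : ∀ (s : S) (o : ∀ j, O j) (a : ∀ j, A j),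
      (C s o a * ((Q o a - B o a) - α * Real.log (π i (ψ i) (o i) (a i)))) •
        fderiv ℝ (fun x => π i x (o i) (a i)) (ψ i)
      = (d s * E s o * (∏ j, π j (ψ j) (o j) (a j)) *
          (Q o a - α * Real.log (π i (ψ i) (o i) (a i)) - B o a)) •
          fderiv ℝ (fun ψi : Ψ i => Real.log (π i ψi (o i) (a i))) (ψ i) := by
    intro s o a
    have hp := hpos i (ψ i) (o i) (a i)
    have hlog : fderiv ℝ (fun x => Real.log (π i x (o i) (a i))) (ψ i)
        = (π i (ψ i) (o i) (a i))⁻¹ • fderiv ℝ (fun x => π i x (o i) (a i)) (ψ i) :=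
      ((hu (o i) (a i)).log hp.ne').fderiv
    have hprod : ∏ j, π j (ψ j) (o j) (a j)
        = π i (ψ i) (o i) (a i) * ∏ j ∈ Finset.univ.erase i, π j (ψ j) (o j) (a j) :=
      (Finset.mul_prod_erase Finset.univ _ (Finset.mem_univ i)).symm
    rw [hlog, hprod, smul_smul, hC]
    congr 1
    field_simp
    ring
  refine Finset.sum_congr rfl fun s _ => Finset.sum_congr rfl fun o _ => ?_
  have hsplit : ∑ a : (∀ j, A j),
      ((C s o a * ((Q o a - B o a) - α * Real.log (π i (ψ i) (o i) (a i))) - α * C s o a)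
        • fderiv ℝ (fun x => π i x (o i) (a i)) (ψ i))
      = (∑ a : (∀ j, A j), (C s o a * ((Q o a - B o a) - α * Real.log (π i (ψ i) (o i) (a i))))
          • fderiv ℝ (fun x => π i x (o i) (a i)) (ψ i))
        - ∑ a : (∀ j, A j), (α * C s o a) • fderiv ℝ (fun x => π i x (o i) (a i)) (ψ i) := by
    rw [← Finset.sum_sub_distrib]
    exact Finset.sum_congr rfl fun a _ => sub_smul _ _ _
  rw [hsplit, hzero s o, sub_zero]
  exact Finset.sum_congr rfl fun a _ => hterm s o a
end

section
/- (SAC-based joint actor gradient, exact on-policy combination, Proposition 3 first equation.) In the multi-agent setup, fix agent i, ψ₀ⁱ ∈ Ψⁱ, real constants α, α₁, α₂, fixed real-valued functions Q₁(o,a), Q₂(o,a), tg(o,a), B(o,a^{∖i}) independent of ψⁱ (with B independent of agent i's action), and set δ_k(o,a) = Q_k(o,a) − tg(o,a) for k = 1,2. Define J(ψⁱ) = ∑_{s,o,a} d(s)E(o|s)(∏_j πʲ(aʲ|oʲ))·[α₁(Q₁(o,a) − α·log πⁱ_{ψⁱ}(aⁱ|oⁱ) − B(o,a^{∖i})) +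 α₂(δ₁(o,a)² + δ₂(o,a)²)]. Then the Fréchet derivative of J at ψ₀ⁱ equals ∑_{s,o,a} d(s)E(o|s)(∏_j πʲ(aʲ|oʲ))·D_{ψⁱ}(log πⁱ_{ψⁱ}(aⁱ|oⁱ))|_{ψ₀ⁱ}·[α₁(Q₁ − α·log πⁱ_{ψ₀ⁱ}(aⁱ|oⁱ) − B) + α₂(δ₁² + δ₂²)]. -/
lemma sac_aux_hasFDeriv {Ψ : Type*} [NormedAddCommGroup Ψ] [NormedSpace ℝ Ψ]
    (f : Ψ → ℝ) (x : Ψ) (c k β : ℝ)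
    (hf : DifferentiableAt ℝ f x) (hfx : 0 < f x) :
    HasFDerivAt (fun y => c * f y * (k - β * Real.log (f y)))
      ((c * (k - β * Real.log (f x)) - c * β) • fderiv ℝ f x) x := by
  have hf' : HasFDerivAt f (fderiv ℝ f x) x := hf.hasFDerivAt
  have hlog := hf'.log (ne_of_gt hfx)
  have h1 : HasFDerivAt (fun y => c * f y) (c • fderiv ℝ f x) x := hf'.const_mul c
  have h2 : HasFDerivAt (fun y => k - β * Real.log (f y))
      (k • (0 : Ψ →L[ℝ] ℝ) - (β • ((f x)⁻¹ • fderiv ℝ f x))) x := by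
    have := (hasFDerivAt_const k x).fun_sub (hlog.const_mul β)
    simpa using this
  have h := h1.fun_mul h2
  refine h.congr_fderiv (Eq.symm ?_)
  have hne : f x ≠ 0 := ne_of_gt hfx
  rw [smul_sub, smul_smul, smul_smul, smul_smul, smul_zero, zero_sub, sub_smul, ← sub_smul]
  have : c * f x * β * (f x)⁻¹ = c * β := by field_simp
  rw [this, smul_smul]
  module

/-- SAC-based joint actor gradient (exact on-policy combination, Proposition 3, first
equation): with twin critics `Q₁, Q₂`, TD target `tg`, baseline `B` (independent of
agent `i`'s action) all fixed, and `δ_k = Q_k − tg`, the Fréchet derivative at `ψ i` of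
`J(ψⁱ) = ∑_{s,o,a} d·E·(∏ j πʲ)·[α₁(Q₁ − α·log πⁱ_{ψⁱ} − B) + α₂(δ₁² + δ₂²)]` equals
`∑_{s,o,a} d·E·(∏ j πʲ)·[α₁(Q₁ − α·log πⁱ_{ψ i} − B) + α₂(δ₁² + δ₂²)] • D(log πⁱ)|_{ψ i}`. -/
theorem sac_joint_actor_gradient
    {ι : Type*} [Fintype ι] [DecidableEq ι]
    {S : Type*} [Fintype S]
    {O : ι → Type*} [∀ j, Fintype (O j)]
    {A : ι → Type*} [∀ j, Fintype (A j)]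
    {Ψ : ι → Type*} [∀ j, NormedAddCommGroup (Ψ j)] [∀ j, NormedSpace ℝ (Ψ j)]
    (π : ∀ j, Ψ j → O j → A j → ℝ)
    (hpos : ∀ (j : ι) (ψj : Ψ j) (oj : O j) (aj : A j), 0 < π j ψj oj aj)
    (hdiff : ∀ (j : ι) (ψj : Ψ j) (oj : O j) (aj : A j),
      DifferentiableAt ℝ (fun p => π j p oj aj) ψj)
    (hnorm : ∀ (j : ι) (ψj : Ψ j) (oj : O j), ∑ aj : A j, π j ψj oj aj = 1)
    (d : S → ℝ) (hd : ∀ s, 0 ≤ d s)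
    (E : S → (∀ j, O j) → ℝ) (hE : ∀ s o, 0 ≤ E s o)
    (i : ι) (ψ : ∀ j, Ψ j)
    (α α₁ α₂ : ℝ)
    (Q₁ Q₂ tg : (∀ j, O j) → (∀ j, A j) → ℝ)
    (B : (∀ j, O j) → (∀ j, A j) → ℝ)
    (hB : ∀ (o : ∀ j, O j) (a a' : ∀ j, A j),
      (∀ j, j ≠ i → a j = a' j) → B o a = B o a') :
    fderiv ℝ (fun ψi : Ψ i => ∑ s : S, ∑ o : (∀ j, O j), ∑ a : (∀ j, A j),
        d s * E s o * (∏ j, π j (Function.update ψ i ψi j) (o j) (a j)) *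
          (α₁ * (Q₁ o a - α * Real.log (π i ψi (o i) (a i)) - B o a)
            + α₂ * ((Q₁ o a - tg o a) ^ 2 + (Q₂ o a - tg o a) ^ 2))) (ψ i)
      = ∑ s : S, ∑ o : (∀ j, O j), ∑ a : (∀ j, A j),
          (d s * E s o * (∏ j, π j (ψ j) (o j) (a j)) *
            (α₁ * (Q₁ o a - α * Real.log (π i (ψ i) (o i) (a i)) - B o a)
              + α₂ * ((Q₁ o a - tg o a) ^ 2 + (Q₂ o a - tg o a) ^ 2))) •
            fderiv ℝ (fun ψi : Ψ i => Real.log (π i ψi (o i) (a i))) (ψ i) := by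
  classical
  -- shorthand
  set β : ℝ := α₁ * α with hβ
  have hprodψ : ∀ (o : ∀ j, O j) (a : ∀ j, A j),
      (∏ j, π j (ψ j) (o j) (a j)) =
        π i (ψ i) (o i) (a i) * ∏ j ∈ Finset.univ.erase i, π j (ψ j) (o j) (a j) :=
    fun o a => (Finset.mul_prod_erase Finset.univ _ (Finset.mem_univ i)).symm
  have hprod : ∀ (ψi : Ψ i) (o : ∀ j, O j) (a : ∀ j, A j),
      (∏ j, π j (Function.update ψ i ψi j) (o j) (a j)) =
        π i ψi (o i) (a i) * ∏ j ∈ Finset.univ.erase i, π j (ψ j) (o j) (a j) := by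
    intro ψi o a
    rw [← Finset.mul_prod_erase Finset.univ _ (Finset.mem_univ i), Function.update_self]
    congr 1
    exact Finset.prod_congr rfl fun j hj => by
      rw [Function.update_of_ne (Finset.ne_of_mem_erase hj)]
  -- per term coefficients
  have hkey : ∀ (s : S) (o : ∀ j, O j) (a : ∀ j, A j),
      HasFDerivAt (fun ψi : Ψ i =>
        d s * E s o * (∏ j, π j (Function.update ψ i ψi j) (o j) (a j)) *
          (α₁ * (Q₁ o a - α * Real.log (π i ψi (o i) (a i)) - B o a)
            + α₂ * ((Q₁ o a - tg o a) ^ 2 + (Q₂ o a - tg o a) ^ 2)))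
        (((d s * E s o * ∏ j ∈ Finset.univ.erase i, π j (ψ j) (o j) (a j)) *
            ((α₁ * (Q₁ o a - B o a)
              + α₂ * ((Q₁ o a - tg o a) ^ 2 + (Q₂ o a - tg o a) ^ 2))
              - β * Real.log (π i (ψ i) (o i) (a i)))
          - (d s * E s o * ∏ j ∈ Finset.univ.erase i, π j (ψ j) (o j) (a j)) * β) •
          fderiv ℝ (fun p => π i p (o i) (a i)) (ψ i)) (ψ i) := by
    intro s o a
    have h := sac_aux_hasFDeriv (fun p => π i p (o i) (a i)) (ψ i)
      (d s * E s o * ∏ j ∈ Finset.univ.erase i, π j (ψ j) (o j) (a j))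
      (α₁ * (Q₁ o a - B o a)
        + α₂ * ((Q₁ o a - tg o a) ^ 2 + (Q₂ o a - tg o a) ^ 2))
      β (hdiff i (ψ i) (o i) (a i)) (hpos i (ψ i) (o i) (a i))
    have hfun : (fun ψi : Ψ i =>
        d s * E s o * (∏ j, π j (Function.update ψ i ψi j) (o j) (a j)) *
          (α₁ * (Q₁ o a - α * Real.log (π i ψi (o i) (a i)) - B o a)
            + α₂ * ((Q₁ o a - tg o a) ^ 2 + (Q₂ o a - tg o a) ^ 2)))
        = fun ψi : Ψ i =>
          (d s * E s o * ∏ j ∈ Finset.univ.erase i, π j (ψ j) (o j) (a j)) *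
            π i ψi (o i) (a i) *
            ((α₁ * (Q₁ o a - B o a)
              + α₂ * ((Q₁ o a - tg o a) ^ 2 + (Q₂ o a - tg o a) ^ 2))
              - β * Real.log (π i ψi (o i) (a i))) := by
      funext ψi
      rw [hprod ψi o a, hβ]
      ring
    rw [hfun]
    exact h
  have htot := HasFDerivAt.fun_sum (fun s (_ : s ∈ (Finset.univ : Finset S)) =>
    HasFDerivAt.fun_sum (fun o (_ : o ∈ (Finset.univ : Finset (∀ j, O j))) =>
      HasFDerivAt.fun_sum (fun a (_ : a ∈ (Finset.univ : Finset (∀ j, A j))) => hkey s o a)))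
  rw [htot.fderiv]
  -- log derivative identity
  have hlogfd : ∀ (o : ∀ j, O j) (a : ∀ j, A j),
      fderiv ℝ (fun ψi : Ψ i => Real.log (π i ψi (o i) (a i))) (ψ i)
        = (π i (ψ i) (o i) (a i))⁻¹ • fderiv ℝ (fun p => π i p (o i) (a i)) (ψ i) :=
    fun o a => (((hdiff i (ψ i) (o i) (a i)).hasFDerivAt).log
      (ne_of_gt (hpos i (ψ i) (o i) (a i)))).fderiv
  -- the correction terms sum to zero over a (for fixed s, o)
  have hzero : ∀ (s : S) (o : ∀ j, O j),
      ∑ a : (∀ j, A j),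
        ((d s * E s o * ∏ j ∈ Finset.univ.erase i, π j (ψ j) (o j) (a j)) * β) •
          fderiv ℝ (fun p => π i p (o i) (a i)) (ψ i) = 0 := by
    intro s o
    have hAne : Nonempty (A i) := by
      by_contra h
      have hie : IsEmpty (A i) := not_nonempty_iff.mp h
      have h1 := hnorm i (ψ i) (o i)
      rw [Finset.univ_eq_empty, Finset.sum_empty] at h1
      exact one_ne_zero h1.symm
    have hF0 : ∑ ai : A i, fderiv ℝ (fun p => π i p (o i) ai) (ψ i) = 0 := by
      have h1 : HasFDerivAt (fun p : Ψ i => ∑ ai : A i, π i p (o i) ai)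
          (∑ ai : A i, fderiv ℝ (fun p => π i p (o i) ai) (ψ i)) (ψ i) :=
        HasFDerivAt.fun_sum fun ai _ => (hdiff i (ψ i) (o i) ai).hasFDerivAt
      have h2 : (fun p : Ψ i => ∑ ai : A i, π i p (o i) ai) = fun _ => (1 : ℝ) :=
        funext fun p => hnorm i p (o i)
      rw [h2] at h1
      exact h1.unique (hasFDerivAt_const 1 (ψ i))
    set g : (∀ j, A j) → (Ψ i →L[ℝ] ℝ) := fun a =>
      ((d s * E s o * ∏ j ∈ Finset.univ.erase i, π j (ψ j) (o j) (a j)) * β) •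
        fderiv ℝ (fun p => π i p (o i) (a i)) (ψ i) with hg
    set e := Equiv.piSplitAt i A with he
    have a0 := Classical.arbitrary (A i)
    calc ∑ a : (∀ j, A j), g a
        = ∑ p : A i × (∀ j : { j // j ≠ i }, A j), g (e.symm p) :=
          (Equiv.sum_comp e.symm g).symm
      _ = ∑ ai : A i, ∑ r : (∀ j : { j // j ≠ i }, A j), g (e.symm (ai, r)) :=
          by rw [Fintype.sum_prod_type]
      _ = ∑ r : (∀ j : { j // j ≠ i }, A j), ∑ ai : A i, g (e.symm (ai, r)) :=
          Finset.sum_comm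
      _ = 0 := by
          refine Finset.sum_eq_zero fun r _ => ?_
          have hcoef : ∀ ai : A i,
              (∏ j ∈ Finset.univ.erase i, π j (ψ j) (o j) (e.symm (ai, r) j)) =
              (∏ j ∈ Finset.univ.erase i, π j (ψ j) (o j) (e.symm (a0, r) j)) := by
            intro ai
            refine Finset.prod_congr rfl fun j hj => ?_
            have hji : j ≠ i := Finset.ne_of_mem_erase hj
            simp [he, Equiv.piSplitAt_symm_apply, hji]
          have hi : ∀ ai : A i, e.symm (ai, r) i = ai := by
            intro ai; simp [he, Equiv.piSplitAt_symm_apply]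
          have : ∀ ai : A i, g (e.symm (ai, r)) =
              ((d s * E s o * ∏ j ∈ Finset.univ.erase i,
                  π j (ψ j) (o j) (e.symm (a0, r) j)) * β) •
                fderiv ℝ (fun p => π i p (o i) ai) (ψ i) := by
            intro ai
            rw [hg]
            simp only [hcoef ai, hi ai]
          rw [Finset.sum_congr rfl fun ai _ => this ai, ← Finset.smul_sum, hF0, smul_zero]
  -- conclude
  refine Finset.sum_congr rfl fun s _ => Finset.sum_congr rfl fun o _ => ?_
  have hsplit : ∀ a : (∀ j, A j),
      (((d s * E s o * ∏ j ∈ Finset.univ.erase i, π j (ψ j) (o j) (a j)) *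
            ((α₁ * (Q₁ o a - B o a)
              + α₂ * ((Q₁ o a - tg o a) ^ 2 + (Q₂ o a - tg o a) ^ 2))
              - β * Real.log (π i (ψ i) (o i) (a i)))
          - (d s * E s o * ∏ j ∈ Finset.univ.erase i, π j (ψ j) (o j) (a j)) * β) •
          fderiv ℝ (fun p => π i p (o i) (a i)) (ψ i))
      = ((d s * E s o * (∏ j, π j (ψ j) (o j) (a j)) *
            (α₁ * (Q₁ o a - α * Real.log (π i (ψ i) (o i) (a i)) - B o a)
              + α₂ * ((Q₁ o a - tg o a) ^ 2 + (Q₂ o a - tg o a) ^ 2))) •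
            fderiv ℝ (fun ψi : Ψ i => Real.log (π i ψi (o i) (a i))) (ψ i))
        - ((d s * E s o * ∏ j ∈ Finset.univ.erase i, π j (ψ j) (o j) (a j)) * β) •
            fderiv ℝ (fun p => π i p (o i) (a i)) (ψ i) := by
    intro a
    rw [sub_smul, hlogfd o a, smul_smul]
    congr 2
    rw [hprodψ o a, hβ]
    have hne : π i (ψ i) (o i) (a i) ≠ 0 := ne_of_gt (hpos i (ψ i) (o i) (a i))
    field_simp
    ring
  rw [Finset.sum_congr rfl fun a _ => hsplit a, Finset.sum_sub_distrib, hzero s o,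
    sub_zero]
end
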